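/- Let R be a local commutative ring and (M, φ) a nonzero symmetric bilinear space over R (so M is free of some rank k ≥ 1). Then M admits an orthogonal basis, i.e., a basis e₁,…,e_k of M with φ(e_i, e_j) = 0 for all i ≠ j, if and only if there exists m ∈ M with φ(m, m) ∈ R^×. -/

import Mathlib

open TensorProduct

universe u

/-- A symmetric bilinear space over a commutative ring `R`: a finitely generated projective
`R`-module together with a symmetric bilinear form inducing an isomorphism onto the dual. -/
structure SymBilSpace (R : Type u) [CommRing R] : Type (u + 1) where
  M : Type u
  [isAddCommGroup : AddCommGroup M]
  [isModule : Module R M]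
  projective : Module.Projective R M
  finite : Module.Finite R M
  form : M →ₗ[R] M →ₗ[R] R
  symm : ∀ x y, form x y = form y x
  nondeg : Function.Bijective fun x ↦ form x

attribute [instance] SymBilSpace.isAddCommGroup SymBilSpace.isModule

namespace SymBilSpace

variable {R : Type u} [CommRing R]

/-- Isometry of symmetric bilinear spaces. -/
def Isometric (V W : SymBilSpace R) : Prop :=
  ∃ e : V.M ≃ₗ[R] W.M, ∀ x y, W.form (e x) (e y) = V.form x y

/-- Orthogonal direct sum of symmetric bilinear spaces. -/
noncomputable def orthSum (V W : SymBilSpace R) : SymBilSpace R where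
  M := V.M × W.M
  projective := by have := V.projective; have := W.projective; infer_instance
  finite := by have := V.finite; have := W.finite; infer_instance
  form := V.form.compl₁₂ (LinearMap.fst R V.M W.M) (LinearMap.fst R V.M W.M)
        + W.form.compl₁₂ (LinearMap.snd R V.M W.M) (LinearMap.snd R V.M W.M)
  symm := by
    intro x y
    simp only [LinearMap.add_apply, LinearMap.compl₁₂_apply, LinearMap.fst_apply,
      LinearMap.snd_apply]
    rw [V.symm x.1 y.1, W.symm x.2 y.2]
  nondeg := by
    have key : (fun x ↦ (V.form.compl₁₂ (LinearMap.fst R V.M W.M) (LinearMap.fst R V.M W.M)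
          + W.form.compl₁₂ (LinearMap.snd R V.M W.M) (LinearMap.snd R V.M W.M)) x)
        = (Module.dualProdDualEquivDual R V.M W.M) ∘
            (Prod.map (fun x ↦ V.form x) (fun y ↦ W.form y)) := by
      funext x
      ext y
      · simp [Module.dualProdDualEquivDual]
      · simp [Module.dualProdDualEquivDual]
    rw [key]
    exact (Module.dualProdDualEquivDual R V.M W.M).bijective.comp
      (V.nondeg.prodMap W.nondeg)

/-- The rank one symmetric bilinear space `⟨a⟩` associated to a unit `a`, given by the form
`(x, y) ↦ a * x * y` on `R`. -/
noncomputable def unit (R : Type u) [CommRing R] (a : Rˣ) : SymBilSpace R where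
  M := R
  projective := inferInstance
  finite := inferInstance
  form := LinearMap.mk₂ R (fun x y => (a : R) * x * y)
    (fun x x' y => by ring) (fun c x y => by simp [smul_eq_mul]; ring)
    (fun x y y' => by ring) (fun c x y => by simp [smul_eq_mul]; ring)
  symm := fun x y => by simp [LinearMap.mk₂_apply]; ring
  nondeg := by
    constructor
    · intro x y h
      have h1 : (a : R) * x * 1 = (a : R) * y * 1 := by
        have := congrArg (fun f : R →ₗ[R] R => f 1) h
        simpa [LinearMap.mk₂_apply] using this
      have h2 : (a : R) * x = (a : R) * y := by simpa using h1
      calc x = (a⁻¹ : Rˣ) * ((a : R) * x) := by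
                rw [← mul_assoc, Units.inv_mul, one_mul]
        _ = (a⁻¹ : Rˣ) * ((a : R) * y) := by rw [h2]
        _ = y := by rw [← mul_assoc, Units.inv_mul, one_mul]
    · intro f
      refine ⟨(a⁻¹ : Rˣ) * f 1, ?_⟩
      apply LinearMap.ext
      intro y
      have : f y = y * f 1 := by
        conv_lhs => rw [← mul_one y, ← smul_eq_mul, map_smul, smul_eq_mul]
      simp only [LinearMap.mk₂_apply]
      rw [this]
      rw [show (a : R) * ((a⁻¹ : Rˣ) * f 1) * y = ((a : R) * (a⁻¹ : Rˣ)) * (f 1 * y) by ring,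
        Units.mul_inv, one_mul, mul_comm]

/-- The hyperbolic plane over `R`: `R²` with the form of Gram matrix `[[0,1],[1,0]]`. -/
noncomputable def hyperbolic (R : Type u) [CommRing R] : SymBilSpace R where
  M := R × R
  projective := inferInstance
  finite := inferInstance
  form := LinearMap.mk₂ R (fun x y => x.1 * y.2 + x.2 * y.1)
    (fun x x' y => by simp [Prod.fst_add, Prod.snd_add]; ring)
    (fun c x y => by simp [Prod.smul_fst, Prod.smul_snd, smul_eq_mul]; ring)
    (fun x y y' => by simp [Prod.fst_add, Prod.snd_add]; ring)
    (fun c x y => by simp [Prod.smul_fst, Prod.smul_snd, smul_eq_mul]; ring)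
  symm := fun x y => by simp [LinearMap.mk₂_apply]; ring
  nondeg := by
    constructor
    · intro x y h
      have h1 := congrArg (fun f : R × R →ₗ[R] R => f (1, 0)) h
      have h2 := congrArg (fun f : R × R →ₗ[R] R => f (0, 1)) h
      simp only [LinearMap.mk₂_apply, mul_zero, mul_one, zero_add, add_zero] at h1 h2
      exact Prod.ext h2 h1
    · intro f
      refine ⟨(f (0, 1), f (1, 0)), ?_⟩
      apply LinearMap.ext
      intro y
      have hy : y = y.1 • ((1 : R), (0 : R)) + y.2 • ((0 : R), (1 : R)) := by
        ext <;> simp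
      have hfy : f y = y.1 * f (1, 0) + y.2 * f (0, 1) := by
        conv_lhs => rw [hy]
        rw [map_add, map_smul, map_smul, smul_eq_mul, smul_eq_mul]
      simp only [LinearMap.mk₂_apply]
      rw [hfy]
      ring

end SymBilSpace

/-- The defining relations of the Grothendieck-Witt group: the class of an orthogonal sum is
the sum of the classes, and isometric spaces have equal classes. -/
def gwRelation (R : Type u) [CommRing R] :
    FreeAbelianGroup (SymBilSpace R) → FreeAbelianGroup (SymBilSpace R) → Prop := fun x y =>
  (∃ V W : SymBilSpace R, x = FreeAbelianGroup.of (V.orthSum W) ∧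
      y = FreeAbelianGroup.of V + FreeAbelianGroup.of W) ∨
  (∃ V W : SymBilSpace R, V.Isometric W ∧ x = FreeAbelianGroup.of V ∧
      y = FreeAbelianGroup.of W)

/-- The additive congruence generated by the Grothendieck-Witt relations. -/
def gwCon (R : Type u) [CommRing R] : AddCon (FreeAbelianGroup (SymBilSpace R)) :=
  addConGen (gwRelation R)

/-- The Grothendieck-Witt group of a commutative ring: the group completion of the monoid of
isometry classes of symmetric bilinear spaces under orthogonal direct sum. -/
def GW (R : Type u) [CommRing R] : Type (u + 1) := (gwCon R).Quotient

noncomputable instance (R : Type u) [CommRing R] : AddCommGroup (GW R) :=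
  { (inferInstance : AddGroup ((gwCon R).Quotient)) with
    add_comm := fun a b => AddCon.induction_on₂ a b fun x y => by
      show ((x + y : FreeAbelianGroup (SymBilSpace R)) : (gwCon R).Quotient) = ↑(y + x)
      rw [add_comm] }

/-- The Grothendieck-Witt class of a symmetric bilinear space. -/
def GWclass {R : Type u} [CommRing R] (V : SymBilSpace R) : GW R :=
  (gwCon R).mk' (FreeAbelianGroup.of V)

/-- The orthogonal complement of a submodule with respect to a bilinear form. -/
def orthComp {R : Type u} [CommRing R] {M : Type u} [AddCommGroup M] [Module R M]
    (φ : M →ₗ[R] M →ₗ[R] R) (N : Submodule R M) : Submodule R M where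
  carrier := {m | ∀ n ∈ N, φ m n = 0}
  add_mem' := fun {x y} hx hy => by
    intro n hn
    simp [hx n hn, hy n hn]
  zero_mem' := by intro n hn; simp
  smul_mem' := fun c x hx => by
    intro n hn
    simp [hx n hn]

/-- A bilinear pairing between two modules is perfect if both induced maps to the duals
are bijective. -/
def IsPerfect {R : Type u} [CommRing R] {P Q : Type u} [AddCommGroup P] [Module R P]
    [AddCommGroup Q] [Module R Q] (β : P →ₗ[R] Q →ₗ[R] R) : Prop :=
  (Function.Bijective fun x ↦ β x) ∧ (Function.Bijective fun y ↦ β.flip y)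

/-- The hyperbolic-type symmetric bilinear space on `P ⊕ Q` associated to a perfect pairing
`β : P × Q → R`, with form `((x,y),(x',y')) ↦ β x y' + β x' y`. -/
noncomputable def hypPair {R : Type u} [CommRing R] {P Q : Type u} [AddCommGroup P] [Module R P]
    [AddCommGroup Q] [Module R Q] (hP : Module.Projective R P) (hP' : Module.Finite R P)
    (hQ : Module.Projective R Q) (hQ' : Module.Finite R Q)
    (β : P →ₗ[R] Q →ₗ[R] R) (hβ : IsPerfect β) : SymBilSpace R where
  M := P × Q
  projective := by infer_instance
  finite := by infer_instance
  form := β.compl₁₂ (LinearMap.fst R P Q) (LinearMap.snd R P Q)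
        + β.flip.compl₁₂ (LinearMap.snd R P Q) (LinearMap.fst R P Q)
  symm := by
    intro x y
    simp only [LinearMap.add_apply, LinearMap.compl₁₂_apply, LinearMap.fst_apply,
      LinearMap.snd_apply, LinearMap.flip_apply]
    exact add_comm _ _
  nondeg := by
    have key : (fun x ↦ (β.compl₁₂ (LinearMap.fst R P Q) (LinearMap.snd R P Q)
          + β.flip.compl₁₂ (LinearMap.snd R P Q) (LinearMap.fst R P Q)) x)
        = (Module.dualProdDualEquivDual R P Q) ∘
            (Prod.map (fun y ↦ β.flip y) (fun x ↦ β x)) ∘ ⇑(Equiv.prodComm P Q) := by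
      funext x
      ext y
      · simp [Module.dualProdDualEquivDual]
      · simp [Module.dualProdDualEquivDual]
    rw [key]
    exact (Module.dualProdDualEquivDual R P Q).bijective.comp
      ((hβ.2.prodMap hβ.1).comp (Equiv.prodComm P Q).bijective)

section AuxOrthogonalBasis

set_option linter.unusedSectionVars false

section Split

variable {R : Type} [CommRing R] [IsLocalRing R] {M : Type} [AddCommGroup M] [Module R M]

lemma unit_add_nonunit {u a : R} (hu : IsUnit u) (ha : ¬ IsUnit a) : IsUnit (u + a) := by
  by_contra h
  have : IsUnit ((u + a) + (-a)) := by simpa using hu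
  rcases IsLocalRing.isUnit_or_isUnit_of_isUnit_add this with h' | h'
  · exact h h'
  · exact ha (by simpa using h'.neg)

variable (φ : M →ₗ[R] M →ₗ[R] R)

lemma mem_perp (e z : M) : z ∈ LinearMap.ker (φ.flip e) ↔ φ z e = 0 := by
  simp [LinearMap.mem_ker]

/-- Projection onto the orthogonal complement of `e`. -/
noncomputable def perpProj (e : M) (hu : IsUnit (φ e e)) : M →ₗ[R] M :=
  LinearMap.id - LinearMap.smulRight (φ.flip e) ((↑hu.unit⁻¹ : R) • e)

lemma perpProj_apply (e : M) (hu : IsUnit (φ e e)) (z : M) :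
    perpProj φ e hu z = z - φ z e • ((↑hu.unit⁻¹ : R) • e) := rfl

lemma perpProj_mem (e : M) (hu : IsUnit (φ e e)) (z : M) :
    perpProj φ e hu z ∈ LinearMap.ker (φ.flip e) := by
  rw [mem_perp, perpProj_apply, map_sub, LinearMap.sub_apply, map_smul, LinearMap.smul_apply,
    map_smul, LinearMap.smul_apply, smul_eq_mul, smul_eq_mul]
  linear_combination (-(φ z e)) * hu.val_inv_mul

lemma perpProj_of_mem (e : M) (hu : IsUnit (φ e e)) {z : M}
    (hz : z ∈ LinearMap.ker (φ.flip e)) : perpProj φ e hu z = z := by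
  rw [mem_perp] at hz
  rw [perpProj_apply, hz, zero_smul, sub_zero]

/-- The corestricted projection. -/
noncomputable def perpProj' (e : M) (hu : IsUnit (φ e e)) :
    M →ₗ[R] LinearMap.ker (φ.flip e) :=
  LinearMap.codRestrict _ (perpProj φ e hu) (perpProj_mem φ e hu)

lemma perpProj'_comp_subtype (e : M) (hu : IsUnit (φ e e)) :
    (perpProj' φ e hu).comp (LinearMap.ker (φ.flip e)).subtype = LinearMap.id := by
  ext n
  exact perpProj_of_mem φ e hu n.2

lemma perp_finite [Module.Finite R M] (e : M) (hu : IsUnit (φ e e)) :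
    Module.Finite R (LinearMap.ker (φ.flip e)) := by
  apply Module.Finite.of_surjective (perpProj' φ e hu)
  intro n
  exact ⟨↑n, Subtype.ext (perpProj_of_mem φ e hu n.2)⟩

lemma perp_projective [Module.Projective R M] (e : M) (hu : IsUnit (φ e e)) :
    Module.Projective R (LinearMap.ker (φ.flip e)) :=
  Module.Projective.of_split (LinearMap.ker (φ.flip e)).subtype (perpProj' φ e hu)
    (perpProj'_comp_subtype φ e hu)

lemma perp_nondeg (hs : ∀ x y, φ x y = φ y x)
    (hnd : Function.Bijective fun x ↦ φ x) (e : M) (hu : IsUnit (φ e e)) :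
    Function.Bijective fun x : LinearMap.ker (φ.flip e) ↦
      (φ.compl₁₂ (LinearMap.ker (φ.flip e)).subtype (LinearMap.ker (φ.flip e)).subtype) x := by
  set N := LinearMap.ker (φ.flip e) with hN
  constructor
  · intro n₁ n₂ h
    have h' : ∀ w : N, φ ↑n₁ ↑w = φ ↑n₂ ↑w := fun w => DFunLike.congr_fun h w
    refine Subtype.ext (hnd.injective ?_)
    show φ (↑n₁ : M) = φ (↑n₂ : M)
    ext z
    have d1 : ∀ n : N, φ ↑n z = φ ↑n (perpProj φ e hu z) := by
      intro n
      have hne : φ (↑n : M) e = 0 := (mem_perp φ e ↑n).mp n.2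
      rw [perpProj_apply, map_sub, map_smul, map_smul, smul_eq_mul, smul_eq_mul, hne]
      ring
    rw [d1 n₁, d1 n₂]
    exact h' ⟨_, perpProj_mem φ e hu z⟩
  · intro f
    obtain ⟨m₀, hm₀⟩ := hnd.surjective (f.comp (perpProj' φ e hu))
    refine ⟨perpProj' φ e hu m₀, ?_⟩
    ext y
    have h1 : φ e ↑y = 0 := by rw [hs]; exact (mem_perp φ e ↑y).mp y.2
    have h2 : φ (perpProj φ e hu m₀) ↑y = φ m₀ ↑y := by
      rw [perpProj_apply, map_sub, LinearMap.sub_apply, map_smul, LinearMap.smul_apply,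
        map_smul, LinearMap.smul_apply, smul_eq_mul, smul_eq_mul, h1]
      ring
    calc (φ.compl₁₂ N.subtype N.subtype) (perpProj' φ e hu m₀) y
        = φ (perpProj φ e hu m₀) ↑y := rfl
      _ = φ m₀ ↑y := h2
      _ = (f.comp (perpProj' φ e hu)) ↑y := by rw [← hm₀]
      _ = f (perpProj' φ e hu ↑y) := rfl
      _ = f y := by rw [show perpProj' φ e hu ↑y = y from Subtype.ext (perpProj_of_mem φ e hu y.2)]

end Split

section Perp2

variable {R : Type} [CommRing R] [IsLocalRing R] {M : Type} [AddCommGroup M] [Module R M]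
variable (φ : M →ₗ[R] M →ₗ[R] R)

lemma perp_hli (e : M) (hu : IsUnit (φ e e)) :
    ∀ (c : R), ∀ x ∈ LinearMap.ker (φ.flip e), c • e + x = 0 → c = 0 := by
  intro c x hx hcx
  have h0 : φ (c • e + x) e = 0 := by rw [hcx]; simp
  rw [map_add, LinearMap.add_apply, map_smul, LinearMap.smul_apply, smul_eq_mul,
    (mem_perp φ e x).mp hx, add_zero] at h0
  calc c = c * (φ e e * ↑hu.unit⁻¹) := by rw [hu.mul_val_inv, mul_one]
    _ = (c * φ e e) * ↑hu.unit⁻¹ := by ring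
    _ = 0 := by rw [h0, zero_mul]

lemma perp_hsp (e : M) (hu : IsUnit (φ e e)) :
    ∀ z : M, ∃ c : R, z + c • e ∈ LinearMap.ker (φ.flip e) := by
  intro z
  refine ⟨-(↑hu.unit⁻¹ * φ z e), ?_⟩
  rw [mem_perp, map_add, LinearMap.add_apply, map_smul, LinearMap.smul_apply, smul_eq_mul]
  linear_combination (-(φ z e)) * hu.val_inv_mul

lemma perp_finrank [Module.Finite R M] [Module.Projective R M] (e : M) (hu : IsUnit (φ e e)) :
    Module.finrank R M = Module.finrank R (LinearMap.ker (φ.flip e)) + 1 := by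
  haveI := perp_finite φ e hu
  haveI := perp_projective φ e hu
  haveI := Module.finitePresentation_of_projective R (LinearMap.ker (φ.flip e))
  haveI : Module.Free R (LinearMap.ker (φ.flip e)) := Module.free_of_flat_of_isLocalRing
  let bN := Module.finBasis R (LinearMap.ker (φ.flip e))
  let b := Module.Basis.mkFinCons e bN (perp_hli φ e hu) (perp_hsp φ e hu)
  rw [Module.finrank_eq_card_basis b, Fintype.card_fin]

lemma perp_basis (hs : ∀ x y, φ x y = φ y x) [Module.Finite R M] [Module.Projective R M]
    (e : M) (hu : IsUnit (φ e e)) {n : ℕ}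
    (bN : Module.Basis (Fin n) R (LinearMap.ker (φ.flip e)))
    (horth : ∀ i j, i ≠ j → φ ↑(bN i) ↑(bN j) = 0) :
    ∃ b : Module.Basis (Fin (Module.finrank R M)) R M, ∀ i j, i ≠ j → φ (b i) (b j) = 0 := by
  let b0 := Module.Basis.mkFinCons e bN (perp_hli φ e hu) (perp_hsp φ e hu)
  have hcard : Module.finrank R M = n + 1 := by
    rw [Module.finrank_eq_card_basis b0, Fintype.card_fin]
  refine ⟨b0.reindex (finCongr hcard.symm), ?_⟩
  intro i j hij
  rw [Module.Basis.reindex_apply, Module.Basis.reindex_apply, Module.Basis.coe_mkFinCons]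
  have hij' : (finCongr hcard.symm).symm i ≠ (finCongr hcard.symm).symm j := by
    intro h; exact hij (by simpa using congrArg (finCongr hcard.symm) h)
  set i' := (finCongr hcard.symm).symm i
  set j' := (finCongr hcard.symm).symm j
  clear_value i' j'
  clear hij
  induction i' using Fin.cases with
  | zero =>
    induction j' using Fin.cases with
    | zero => exact absurd rfl hij'
    | succ j'' =>
      simp only [Fin.cons_zero, Fin.cons_succ, Function.comp_apply]
      rw [hs]
      exact (mem_perp φ e _).mp (bN j'').2
  | succ i'' =>
    induction j' using Fin.cases with
    | zero =>
      simp only [Fin.cons_zero, Fin.cons_succ, Function.comp_apply]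
      exact (mem_perp φ e _).mp (bN i'').2
    | succ j'' =>
      simp only [Fin.cons_succ, Function.comp_apply]
      exact horth i'' j'' (fun h => hij' (by rw [h]))

end Perp2

lemma exists_orth_aux (R : Type) [CommRing R] [IsLocalRing R] :
    ∀ (k : ℕ) (M : Type) [AddCommGroup M] [Module R M] [Module.Finite R M]
      [Module.Projective R M] (φ : M →ₗ[R] M →ₗ[R] R),
      (∀ x y, φ x y = φ y x) → Function.Bijective (fun x ↦ φ x) →
      Module.finrank R M = k →
      (k = 0 ∨ ∃ m : M, IsUnit (φ m m)) →
      ∃ b : Module.Basis (Fin (Module.finrank R M)) R M, ∀ i j, i ≠ j → φ (b i) (b j) = 0 := by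
  intro k
  induction k using Nat.strong_induction_on with
  | _ k IH =>
    intro M _ _ _ _ φ hs hnd hk hm
    haveI := Module.finitePresentation_of_projective R M
    haveI : Module.Free R M := Module.free_of_flat_of_isLocalRing
    rcases hm with hk0 | ⟨m, hm⟩
    · refine ⟨Module.finBasis R M, fun i j _ => ?_⟩
      have hi := i.isLt
      have h00 : Module.finrank R M = 0 := hk.trans hk0
      omega
    · -- split off the orthogonal complement of m
      set N := LinearMap.ker (φ.flip m) with hN
      haveI := perp_finite φ m hm
      haveI := perp_projective φ m hm
      haveI := Module.finitePresentation_of_projective R N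
      haveI : Module.Free R N := Module.free_of_flat_of_isLocalRing
      have hfr : Module.finrank R M = Module.finrank R N + 1 := perp_finrank φ m hm
      set ψ := φ.compl₁₂ N.subtype N.subtype with hψ
      have hψs : ∀ x y : N, ψ x y = ψ y x := fun x y => hs ↑x ↑y
      have hψnd := perp_nondeg φ hs hnd m hm
      by_cases h0 : Module.finrank R N = 0
      · exact perp_basis φ hs m hm ((Module.finBasis R N).reindex (finCongr h0))
          (fun i _ _ => i.elim0)
      · have hpos : 0 < Module.finrank R N := Nat.pos_of_ne_zero h0
        have hlt : Module.finrank R N < k := by omega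
        let bN := Module.finBasis R N
        let i0 : Fin (Module.finrank R N) := ⟨0, hpos⟩
        obtain ⟨x, hx⟩ := hψnd.surjective (bN.coord i0)
        have hxy : φ ↑x ↑(bN i0) = 1 := by
          have h1 : ψ x (bN i0) = bN.coord i0 (bN i0) := DFunLike.congr_fun hx (bN i0)
          rw [Module.Basis.coord_apply, Module.Basis.repr_self, Finsupp.single_eq_same] at h1
          exact h1
        by_cases hxx : IsUnit (φ (↑x : M) ↑x)
        · obtain ⟨bN', horth⟩ := IH (Module.finrank R N) hlt N ψ hψs hψnd rfl
            (Or.inr ⟨x, hxx⟩)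
          exact perp_basis φ hs m hm bN' horth
        · by_cases hyy : IsUnit (φ (↑(bN i0) : M) ↑(bN i0))
          · obtain ⟨bN', horth⟩ := IH (Module.finrank R N) hlt N ψ hψs hψnd rfl
              (Or.inr ⟨bN i0, hyy⟩)
            exact perp_basis φ hs m hm bN' horth
          · -- the characteristic-2 style trick : e := m + x
            have hxm : φ (↑x : M) m = 0 := (mem_perp φ m ↑x).mp x.2
            have hmx : φ m (↑x : M) = 0 := by rw [hs]; exact hxm
            have hym : φ (↑(bN i0) : M) m = 0 := (mem_perp φ m ↑(bN i0)).mp (bN i0).2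
            have hmy : φ m (↑(bN i0) : M) = 0 := by rw [hs]; exact hym
            have hyx : φ (↑(bN i0) : M) ↑x = 1 := by rw [hs]; exact hxy
            set e : M := m + ↑x with he
            have hee : φ e e = φ m m + φ (↑x : M) ↑x := by
              simp only [he, map_add, LinearMap.add_apply]
              rw [hmx, hxm]
              ring
            have hue : IsUnit (φ e e) := by rw [hee]; exact unit_add_nonunit hm hxx
            have hye : φ (↑(bN i0) : M) e = 1 := by
              rw [he, map_add, hym, hyx, zero_add]
            set z : M := ↑(bN i0) - (↑hue.unit⁻¹ : R) • e with hz
            have hze : φ z e = 0 := by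
              rw [hz, map_sub, LinearMap.sub_apply, map_smul, LinearMap.smul_apply,
                smul_eq_mul, hye]
              linear_combination -hue.val_inv_mul
            have hzz : IsUnit (φ z z) := by
              have hcalc : φ z z = -((↑hue.unit⁻¹ : R) + -(φ (↑(bN i0) : M) ↑(bN i0))) := by
                have hey : φ e (↑(bN i0) : M) = 1 := by rw [hs]; exact hye
                simp only [hz, map_sub, LinearMap.sub_apply, map_smul, LinearMap.smul_apply,
                  smul_eq_mul]
                rw [hye, hey]
                linear_combination (↑hue.unit⁻¹ : R) * hue.val_inv_mul
              rw [hcalc]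
              refine IsUnit.neg (unit_add_nonunit hue.unit⁻¹.isUnit ?_)
              intro hcon
              exact hyy (by simpa using hcon.neg)
            -- split along e instead
            set N' := LinearMap.ker (φ.flip e) with hN'
            haveI := perp_finite φ e hue
            haveI := perp_projective φ e hue
            have hfr' : Module.finrank R M = Module.finrank R N' + 1 := perp_finrank φ e hue
            set ψ' := φ.compl₁₂ N'.subtype N'.subtype with hψ'
            have hψ's : ∀ a b : N', ψ' a b = ψ' b a := fun a b => hs ↑a ↑b
            have hψ'nd := perp_nondeg φ hs hnd e hue
            have hlt' : Module.finrank R N' < k := by omega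
            have hz' : z ∈ N' := (mem_perp φ e z).mpr hze
            obtain ⟨bN', horth⟩ := IH (Module.finrank R N') hlt' N' ψ' hψ's hψ'nd rfl
              (Or.inr ⟨⟨z, hz'⟩, hzz⟩)
            exact perp_basis φ hs e hue bN' horth

end AuxOrthogonalBasis

/-- **Statement 9.** Let `R` be a local ring and `(M, φ)` a nonzero symmetric bilinear space
over `R` (so `M` is free of rank `k ≥ 1`).  Then `M` admits an orthogonal basis if and only
if there exists `m ∈ M` with `φ(m,m)` a unit. -/
theorem statement9 (R : Type) [CommRing R] [IsLocalRing R]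
    (V : SymBilSpace R) (hV : Nontrivial V.M) :
    Module.Free R V.M ∧ 0 < Module.finrank R V.M ∧
    ((∃ b : Module.Basis (Fin (Module.finrank R V.M)) R V.M,
        ∀ i j, i ≠ j → V.form (b i) (b j) = 0) ↔
      ∃ m : V.M, IsUnit (V.form m m)) := by
  haveI := V.projective
  haveI := V.finite
  haveI := Module.finitePresentation_of_projective R V.M
  haveI hfree : Module.Free R V.M := Module.free_of_flat_of_isLocalRing
  have hpos : 0 < Module.finrank R V.M := by
    by_contra h
    push_neg at h
    have h0 : Module.finrank R V.M = 0 := by omega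
    haveI : IsEmpty (Fin (Module.finrank R V.M)) := by rw [h0]; infer_instance
    haveI : Subsingleton (Fin (Module.finrank R V.M) →₀ R) := inferInstance
    haveI : Subsingleton V.M := (Module.finBasis R V.M).repr.toEquiv.subsingleton
    obtain ⟨a, b, hab⟩ := hV
    exact hab (Subsingleton.elim a b)
  refine ⟨hfree, hpos, ?_, ?_⟩
  · rintro ⟨b, horth⟩
    set i0 : Fin (Module.finrank R V.M) := ⟨0, hpos⟩
    obtain ⟨m, hm⟩ := V.nondeg.surjective (b.coord i0)
    have h1 : V.form m (b i0) = 1 := by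
      have := DFunLike.congr_fun hm (b i0)
      simpa [Module.Basis.coord_apply, Module.Basis.repr_self] using this
    have h2 : V.form m (b i0) = b.repr m i0 * V.form (b i0) (b i0) := by
      calc V.form m (b i0) = V.form (∑ j, b.repr m j • b j) (b i0) := by rw [b.sum_repr m]
        _ = ∑ j, b.repr m j * V.form (b j) (b i0) := by
            rw [map_sum, LinearMap.sum_apply]
            exact Finset.sum_congr rfl fun j _ => by
              rw [map_smul, LinearMap.smul_apply, smul_eq_mul]
        _ = b.repr m i0 * V.form (b i0) (b i0) := by
            rw [Finset.sum_eq_single i0 (fun j _ hj => by rw [horth j i0 hj, mul_zero])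
              (fun h => absurd (Finset.mem_univ i0) h)]
    exact ⟨b i0, IsUnit.of_mul_eq_one (b.repr m i0) (by rw [mul_comm, ← h2, h1])⟩
  · rintro ⟨m, hm⟩
    exact exists_orth_aux R (Module.finrank R V.M) V.M V.form V.symm V.nondeg rfl
      (Or.inr ⟨m, hm⟩)
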